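/- Let b > 1 and c be positive integers with gcd(b,c)=1 and 2 ≤ c < b, and let B ⊆ {1,...,n} avoid b(x+y)=cz. If z = b·z₁ is an element of B divisible by b, then at most ⌈c·z₁/2⌉ of the numbers in {1,...,c·z₁} lie in B. -/

import Mathlib

theorem stmt_13 (b c n : ℕ) (hb : 1 < b) (hcop : Nat.Coprime b c)
    (hc1 : 2 ≤ c) (hc2 : c < b)
    (B : Finset ℕ) (hB : B ⊆ Finset.Icc 1 n)
    (havoid : ¬ ∃ x ∈ B, ∃ y ∈ B, ∃ z ∈ B, b * (x + y) = c * z)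
    (z₁ : ℕ) (hz : b * z₁ ∈ B) :
    (B ∩ Finset.Icc 1 (c * z₁)).card ≤ (c * z₁ + 1) / 2 := by
  set m := c * z₁ with hm
  have key : ∀ x ∈ B, ∀ y ∈ B, x + y ≠ m := by
    intro x hx y hy hxy
    exact havoid ⟨x, hx, y, hy, b * z₁, hz, by rw [hxy, hm]; ring⟩
  have h := Finset.card_le_card_of_injOn (fun x => min x (m - x))
    (s := B ∩ Finset.Icc 1 m) (t := Finset.range ((m + 1) / 2)) ?_ ?_
  · simpa using h
  · intro x hx
    simp only [Finset.mem_coe, Finset.mem_inter, Finset.mem_Icc] at hx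
    obtain ⟨hxB, hx1, hxm⟩ := hx
    have hne := key x hxB x hxB
    simp only [Finset.mem_coe, Finset.mem_range]
    omega
  · intro x hx y hy hxy
    simp only [Finset.mem_coe, Finset.mem_inter, Finset.mem_Icc] at hx hy
    have h1 := key x hx.1 y hy.1
    have h2 := key y hy.1 x hx.1
    simp only at hxy
    omega
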